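/- Let G be a subgroup of S_d acting freely and transitively on {1,...,d}, let d = p be prime and m = kp for some k ≥ 1. Then the cardinality of S(G,m) = (G^m/S_m)/G equals (1/p)·(C(p+kp-1, p-1) - 1) + 1. -/

import Mathlib

/-- The relation on `m`-tuples of elements of `G` identifying two tuples iff one is
obtained from the other by permuting the coordinates and simultaneously multiplying
every coordinate on the right by a fixed element of `G`. -/
def SGmRel (G : Type*) [Group G] (m : ℕ) (a b : Fin m → G) : Prop :=
  ∃ (σ : Equiv.Perm (Fin m)) (g : G), ∀ r, b r = a (σ r) * g

/-- `S(G,m) = (G^m / S_m) / G`: the quotient of `G^m` by permutation of coordinates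
and simultaneous right multiplication. -/
def SGm (G : Type*) [Group G] (m : ℕ) : Type _ :=
  Quot (SGmRel G m)

open MulAction

set_option linter.unusedSectionVars false

/-- index-permutation from list permutation of tuples -/
lemma exists_comp_perm_of_perm_ofFn {α : Type*} {n : ℕ} {f g : Fin n → α}
    (h : (List.ofFn f).Perm (List.ofFn g)) : ∃ σ : Equiv.Perm (Fin n), g = f ∘ σ := by
  classical
  letI : LinearOrder α := linearOrderOfSTO WellOrderingRel
  have hf := Tuple.monotone_sort f
  have hg := Tuple.monotone_sort g
  have h1 : List.ofFn (f ∘ Tuple.sort f) = List.ofFn (g ∘ Tuple.sort g) :=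
    List.Perm.eq_of_sortedLE hf.sortedLE_ofFn hg.sortedLE_ofFn
      ((((Tuple.sort f).ofFn_comp_perm f).trans h).trans
        ((Tuple.sort g).ofFn_comp_perm g).symm)
  have h2 : f ∘ (Tuple.sort f) = g ∘ (Tuple.sort g) := List.ofFn_injective h1
  refine ⟨((Tuple.sort g).symm.trans (Tuple.sort f)), ?_⟩
  funext i
  have := congrFun h2 ((Tuple.sort g).symm i)
  simpa using this.symm

/-- type synonym for `Sym H n` carrying the right-multiplication action of `H` -/
def SymM (H : Type*) [Group H] (n : ℕ) := Sym H n

instance SymM.mulAction (H : Type*) [Group H] (n : ℕ) : MulAction H (SymM H n) where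
  smul g s := Sym.map (fun x => x * g⁻¹) s
  one_smul s := by
    revert s; intro (s : Sym H n)
    show Sym.map _ s = s
    ext
    simp [Sym.map]
  mul_smul g h s := by
    revert s; intro (s : Sym H n)
    show Sym.map _ s = Sym.map _ (Sym.map _ s)
    rw [Sym.map_map]
    congr 1
    funext x
    simp [mul_assoc]

lemma SymM.smul_def {H : Type*} [Group H] {n : ℕ} (g : H) (s : SymM H n) :
    g • s = Sym.map (fun x => x * g⁻¹) s := rfl

def symOfFn {H : Type*} [Group H] {n : ℕ} (f : Fin n → H) : SymM H n :=
  ⟨(List.ofFn f : Multiset H), by simp⟩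

lemma symOfFn_smul {H : Type*} [Group H] {n : ℕ} (f : Fin n → H) (σ : Equiv.Perm (Fin n)) (g : H) :
    symOfFn (fun r => f (σ r) * g) = g⁻¹ • symOfFn f := by
  rw [SymM.smul_def]
  apply Subtype.ext
  show ((List.ofFn fun r => f (σ r) * g : List H) : Multiset H)
      = Multiset.map (fun x => x * g⁻¹⁻¹) (List.ofFn f : List H)
  rw [inv_inv, Multiset.map_coe]
  rw [List.map_ofFn]
  apply Quot.sound
  exact σ.ofFn_comp_perm (fun r => f r * g)

noncomputable def sgmEquiv (H : Type*) [Group H] (n : ℕ) :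
    SGm H n ≃ orbitRel.Quotient H (SymM H n) := by
  refine Equiv.ofBijective
    (Quot.lift (fun f => (Quotient.mk'' (symOfFn f) : orbitRel.Quotient H (SymM H n))) ?_) ⟨?_, ?_⟩
  · rintro a b ⟨σ, g, hab⟩
    have : symOfFn b = g⁻¹ • symOfFn a := by
      rw [← symOfFn_smul a σ g]; congr 1; funext r; exact hab r
    refine (Quotient.sound ?_).symm
    exact ⟨g⁻¹, this.symm⟩
  · -- injective
    rintro ⟨a⟩ ⟨b⟩ hab
    obtain ⟨g, hg⟩ := Quotient.exact hab
    -- hg : g • symOfFn b = symOfFn a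
    have hg' : g • symOfFn b = symOfFn a := hg
    rw [SymM.smul_def] at hg'
    have hval : Multiset.map (fun x => x * g⁻¹) (List.ofFn b : List H)
        = ((List.ofFn a : List H) : Multiset H) := congrArg Subtype.val hg'
    rw [Multiset.map_coe, List.map_ofFn] at hval
    have hperm : (List.ofFn ((fun x => x * g⁻¹) ∘ b)).Perm (List.ofFn a) :=
      Quotient.exact hval
    obtain ⟨σ, hσ⟩ := exists_comp_perm_of_perm_ofFn hperm
    refine (Quot.sound ⟨σ, g⁻¹, fun r => ?_⟩).symm
    exact congrFun hσ r
  · -- surjective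
    rintro ⟨s⟩
    obtain ⟨l, hl⟩ : ∃ l : List H, (↑l : Multiset H) = (s : Sym H n).1 := ⟨(s:Sym H n).1.toList, by simp⟩
    have hlen : l.length = n := by
      have := (s : Sym H n).2
      rw [← hl] at this
      simpa using this
    refine ⟨Quot.mk _ (fun i => l.get (Fin.cast hlen.symm i)), ?_⟩
    show Quotient.mk'' _ = _
    have : symOfFn (fun i => l.get (Fin.cast hlen.symm i)) = (s : Sym H n) := by
      apply Subtype.ext
      show ((List.ofFn _ : List H) : Multiset H) = _
      rw [← hl]
      congr 1
      apply List.ext_get (by simp [hlen])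
      intro i h1 h2
      simp
    rw [this]
    rfl

section FixedPoints

variable {H : Type*} [Group H] [Fintype H] [DecidableEq H]

/-- the multiset consisting of `k` copies of each element of `H`, as an element of `SymM`. -/
def fullSym (H : Type*) [Group H] [Fintype H] (k : ℕ) : SymM H (k * Fintype.card H) :=
  ⟨k • (Finset.univ.val : Multiset H), by simp [Multiset.card_nsmul]⟩

lemma smul_fullSym (k : ℕ) (g : H) : g • fullSym H k = fullSym H k := by
  rw [SymM.smul_def]
  apply Subtype.ext
  show Multiset.map (fun x => x * g⁻¹) (k • (Finset.univ.val : Multiset H)) = k • Finset.univ.val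
  rw [Multiset.map_nsmul]
  congr 1
  exact Multiset.map_univ_val_equiv (Equiv.mulRight g⁻¹)

lemma fixedBy_eq_singleton {p : ℕ} (hp : p.Prime) (hH : Fintype.card H = p)
    {g : H} (hg : g ≠ 1) (k : ℕ) :
    fixedBy (SymM H (k * Fintype.card H)) g = {fullSym H k} := by
  ext s
  simp only [Set.mem_singleton_iff, MulAction.mem_fixedBy]
  constructor
  · intro hs
    -- counts are invariant under right multiplication by g
    have hmap : Multiset.map (fun x => x * g⁻¹) (s : Sym H _).1 = (s : Sym H _).1 := by
      conv_rhs => rw [← congrArg Subtype.val hs]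
      rfl
    have hcount : ∀ a : H, Multiset.count (a * g⁻¹) (s : Sym H _).1 = Multiset.count a (s : Sym H _).1 := by
      intro a
      have h := Multiset.count_map_eq_count' (fun x => x * g⁻¹) (s : Sym H _).1 (mul_left_injective g⁻¹) a
      rwa [hmap] at h
    have hcount' : ∀ a : H, Multiset.count (a * g) (s : Sym H _).1 = Multiset.count a (s : Sym H _).1 := by
      intro a
      have := hcount (a * g)
      rw [mul_inv_cancel_right] at this
      exact this.symm
    have hpow : ∀ (m : ℕ) (a : H), Multiset.count (a * g ^ m) (s : Sym H _).1 = Multiset.count a (s : Sym H _).1 := by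
      intro m
      induction m with
      | zero => simp
      | succ m ih =>
        intro a
        rw [pow_succ, ← mul_assoc, hcount' (a * g ^ m), ih a]
    -- g generates H
    have horder : orderOf g = p := by
      rcases hp.eq_one_or_self_of_dvd (orderOf g) (hH ▸ orderOf_dvd_card) with h | h
      · exact absurd (orderOf_eq_one_iff.mp h) hg
      · exact h
    have htop : Subgroup.zpowers g = ⊤ := by
      apply Subgroup.eq_top_of_card_eq
      rw [Nat.card_zpowers, horder, Nat.card_eq_fintype_card, hH]
    have hconst : ∀ a b : H, Multiset.count a (s : Sym H _).1 = Multiset.count b (s : Sym H _).1 := by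
      intro a b
      have : a⁻¹ * b ∈ Submonoid.powers g := by
        rw [mem_powers_iff_mem_zpowers, htop]; trivial
      obtain ⟨m, hm⟩ := this
      have : b = a * g ^ m := by rw [show (g : H) ^ m = a⁻¹ * b from hm, mul_inv_cancel_left]
      rw [this, hpow]
    -- total count
    have hcard : ∀ a : H, Multiset.count a (s : Sym H _).1 = k := by
      intro a
      have hsum : ∑ b : H, Multiset.count b (s : Sym H _).1 = Multiset.card (s : Sym H _).1 := by
        rw [← Multiset.toFinset_sum_count_eq]
        refine (Finset.sum_subset (Finset.subset_univ _) ?_).symm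
        intro x _ hx
        simpa [Multiset.count_eq_zero] using hx
      rw [(s : Sym H _).2] at hsum
      have : ∑ b : H, Multiset.count b (s : Sym H _).1 = Fintype.card H * Multiset.count a (s : Sym H _).1 := by
        rw [Finset.sum_congr rfl fun b _ => hconst b a, Finset.sum_const, Finset.card_univ, smul_eq_mul]
      rw [this] at hsum
      have hp0 : 0 < Fintype.card H := Fintype.card_pos
      exact Nat.eq_of_mul_eq_mul_left hp0 (by rw [hsum, mul_comm])
    apply Subtype.ext
    show (s : Sym H _).1 = k • (Finset.univ.val : Multiset H)
    ext a
    rw [hcard a, Multiset.count_nsmul, Multiset.count_univ, mul_one]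
  · rintro rfl
    exact smul_fullSym k g

end FixedPoints

theorem key {H : Type*} [Group H] [Fintype H] [DecidableEq H] {p k : ℕ} (hp : p.Prime)
    (hk : 1 ≤ k) (hH : Fintype.card H = p) :
    p * Nat.card (SGm H (k * p)) = ((p + k * p - 1).choose (p - 1) - 1) + p := by
  subst hH
  set p := Fintype.card H with hp'
  letI : Fintype (SymM H (k * p)) := inferInstanceAs (Fintype (Sym H (k * p)))
  letI : ∀ a : H, Fintype (fixedBy (SymM H (k * p)) a) := fun a => (Set.toFinite _).fintype
  letI : Fintype (orbitRel.Quotient H (SymM H (k * p))) := Fintype.ofFinite _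
  have hburn := sum_card_fixedBy_eq_card_orbits_mul_card_group H (SymM H (k * p))
  simp_rw [← Nat.card_eq_fintype_card] at hburn
  have hH' : Nat.card H = p := Nat.card_eq_fintype_card
  rw [hH'] at hburn
  -- the sum splits as fixed points of 1 plus the rest
  have hone : Nat.card (fixedBy (SymM H (k * p)) (1 : H)) = Nat.card (SymM H (k * p)) := by
    rw [fixedBy_one_eq_univ, Nat.card_coe_set_eq, Set.ncard_univ]
  have hsingle : ∀ g : H, g ≠ 1 → Nat.card (fixedBy (SymM H (k * p)) g) = 1 := by
    intro g hg
    rw [fixedBy_eq_singleton hp rfl hg k, Nat.card_coe_set_eq, Set.ncard_singleton]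
  have hsplit : ∑ g : H, Nat.card (fixedBy (SymM H (k * p)) g)
      = Nat.card (SymM H (k * p)) + (p - 1) := by
    rw [← Finset.add_sum_erase _ _ (Finset.mem_univ (1 : H)), hone]
    congr 1
    rw [Finset.sum_congr rfl (fun g hg => hsingle g (Finset.ne_of_mem_erase hg)),
      Finset.sum_const, smul_eq_mul, mul_one, Finset.card_erase_of_mem (Finset.mem_univ _),
      Finset.card_univ]
  -- cardinality of Sym
  have hpos : 0 < p := Fintype.card_pos
  have hsym : Nat.card (SymM H (k * p)) = (p + k * p - 1).choose (p - 1) := by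
    rw [Nat.card_eq_fintype_card]
    show Fintype.card (Sym H (k * p)) = _
    rw [Sym.card_sym_eq_choose]
    have h1 : k * p ≤ p + k * p - 1 := by
      have : 1 ≤ k * p := Nat.one_le_iff_ne_zero.mpr (by positivity)
      omega
    rw [← Nat.choose_symm h1]
    congr 1
    omega
  have hquot : Nat.card (SGm H (k * p)) = Nat.card (orbitRel.Quotient H (SymM H (k * p))) :=
    Nat.card_congr (sgmEquiv H (k * p))
  have hN : 1 ≤ (p + k * p - 1).choose (p - 1) :=
    Nat.choose_pos (by omega)
  rw [hsplit, hsym] at hburn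
  rw [hquot]
  have hQ : Nat.card (orbitRel.Quotient H (SymM H (k * p)))
      = Nat.card (Quotient (orbitRel H (SymM H (k * p)))) := rfl
  rw [hQ]
  have hfinal : p * Nat.card (Quotient (orbitRel H (SymM H (k * p))))
      = (p + k * p - 1).choose (p - 1) + (p - 1) := by
    rw [mul_comm]; exact hburn.symm
  rw [hfinal]
  omega

/-- Let `G ≤ S_p` (`p` prime) act freely and transitively on `{1,...,p}` and `m = k p`
with `k ≥ 1`. Then `S(G,m)` has cardinality `(1/p)(C(p+kp-1, p-1) - 1) + 1`. -/
theorem stmt3 (p k : ℕ) (hp : p.Prime) (hk : 1 ≤ k)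
    (G : Subgroup (Equiv.Perm (Fin p)))
    (hreg : ∀ i j : Fin p, ∃! g : G, (g : Equiv.Perm (Fin p)) i = j) :
    p * Nat.card (SGm (↥G) (k * p)) = ((p + k * p - 1).choose (p - 1) - 1) + p := by
  letI : Fintype ↥G := Fintype.ofFinite _
  have i0 : Fin p := ⟨0, hp.pos⟩
  have hbij : Function.Bijective (fun g : ↥G => (g : Equiv.Perm (Fin p)) i0) := by
    constructor
    · intro a b hab
      exact (hreg i0 ((a : Equiv.Perm (Fin p)) i0)).unique rfl hab.symm
    · intro j
      exact ⟨(hreg i0 j).exists.choose, (hreg i0 j).exists.choose_spec⟩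
  have hcard : Fintype.card ↥G = p := by
    rw [Fintype.card_congr (Equiv.ofBijective _ hbij), Fintype.card_fin]
  exact key hp hk hcard
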